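/- For all integers L ≥ 0 and A with -L ≤ A ≤ L, the normalized q-trinomial coefficient Q_1(L,A,q) = T_1(L,A,q)/(q)_L admits the representation Q_1(L,A,q) = Σ_{s=0, s ≡ L+A (mod 2)}^{∞} q^{s(s-1)/2} / ((q)_{(L-A-s)/2} (q)_{(L+A-s)/2} (q)_s), where the sum is effectively finite since terms with a negative Pochhammer index in a denominator vanish. -/

import Mathlib

open Finset

set_option maxHeartbeats 1000000

noncomputable section

/-- The field `F = RatFunc ℚ` of rational functions over `ℚ` in the variable `t`,
where `t` plays the role of `q^(1/2)`. -/
abbrev F : Type := RatFunc ℚ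

/-- The variable `t = q^(1/2)`. -/
def t : F := RatFunc.X

/-- `q = t^2`. -/
def q : F := t ^ 2

/-- The Pochhammer symbol `(a; b)_n = ∏_{k=0}^{n-1} (1 - a bᵏ)`, set equal to `0` for
negative `n` (so that any term containing a factor `1/(a;b)_n` with `n < 0` vanishes). -/
def poch (b a : F) (n : ℤ) : F :=
  if n < 0 then 0 else ∏ k ∈ Finset.range n.toNat, (1 - a * b ^ k)

/-- The `q`-trinomial coefficient `((L; B; qq))_{A,2}` with base `qq`:
`∑_j qq^(j(j+B)) (qq)_L / ((qq)_j (qq)_{j+A} (qq)_{L-2j-A})`; the sum is finite since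
terms with a negative Pochhammer index in the denominator vanish. -/
def trinom (qq : F) (L : ℕ) (B A : ℤ) : F :=
  ∑ j ∈ Finset.range (L + 1),
    qq ^ ((j : ℤ) * ((j : ℤ) + B)) * poch qq qq (L : ℤ) /
      (poch qq qq (j : ℤ) * poch qq qq ((j : ℤ) + A) *
        poch qq qq ((L : ℤ) - 2 * (j : ℤ) - A))

/-- `T_n(L, A, q) = q^((L(L-n) - A(A-n))/2) ((L; A-n; q⁻¹))_{A,2}`; note `t ^ m = q ^ (m/2)`. -/
def T (n : ℤ) (L : ℕ) (A : ℤ) : F :=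
  t ^ ((L : ℤ) * ((L : ℤ) - n) - A * (A - n)) * trinom q⁻¹ L (A - n) A

/-- `Q_n(L, A, q) = T_n(L, A, q) / (q)_L`. -/
def Q (n : ℤ) (L : ℕ) (A : ℤ) : F := T n L A / poch q q (L : ℤ)

/-! ### Auxiliary lemmas -/

lemma t_ne : t ≠ 0 := RatFunc.X_ne_zero

lemma t_pow_ne_one {m : ℕ} (hm : 0 < m) : t ^ m ≠ 1 := by
  intro h
  have h2 : (algebraMap (Polynomial ℚ) (RatFunc ℚ)) (Polynomial.X ^ m) =
      (algebraMap (Polynomial ℚ) (RatFunc ℚ)) 1 := by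
    simpa [t, RatFunc.algebraMap_X, map_pow] using h
  have := RatFunc.algebraMap_injective ℚ h2
  have := congrArg Polynomial.natDegree this
  simp [Polynomial.natDegree_X_pow] at this
  omega

lemma poch_nat (n : ℕ) (a : F) : poch a a (n : ℤ) = ∏ k ∈ Finset.range n, (1 - a * a ^ k) := by
  simp [poch]

lemma poch_neg {n : ℤ} (h : n < 0) (b a : F) : poch b a n = 0 := if_pos h

lemma poch_q_ne (n : ℕ) : poch q q (n : ℤ) ≠ 0 := by
  rw [poch_nat]
  apply Finset.prod_ne_zero_iff.mpr
  intro k _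
  have hq : q * q ^ k = t ^ (2 * (k+1)) := by rw [q]; ring
  rw [hq]
  intro h
  have : t ^ (2*(k+1)) = 1 := by linear_combination -h
  exact t_pow_ne_one (by omega) this

lemma poch_inv (n : ℕ) :
    poch q⁻¹ q⁻¹ (n : ℤ) = (-1) ^ n * t ^ (-(n * (n+1) : ℤ)) * poch q q (n : ℤ) := by
  induction n with
  | zero => simp [poch]
  | succ n ih =>
    rw [poch_nat] at ih ⊢
    rw [Finset.prod_range_succ, ih, poch_nat (n+1) q, Finset.prod_range_succ, ← poch_nat n q]
    have hne : (t : F) ^ (2 * ((n:ℤ)+1)) ≠ 0 := zpow_ne_zero _ t_ne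
    have h1 : q * q ^ n = t ^ (2 * ((n:ℤ)+1)) := by
      rw [show (2 * ((n:ℤ)+1)) = ((2*(n+1) : ℕ) : ℤ) by push_cast; ring, zpow_natCast, q]; ring
    have hfac : (1 - q⁻¹ * (q⁻¹) ^ n) = (-1) * t ^ (-(2 * ((n:ℤ)+1))) * (1 - q * q ^ n) := by
      have h2 : q⁻¹ * (q⁻¹) ^ n = (t ^ (2 * ((n:ℤ)+1)))⁻¹ := by
        rw [← h1, mul_inv, inv_pow]
      rw [h1, h2, zpow_neg]
      field_simp
      ring
    rw [hfac]
    have hz : t ^ (-((n:ℤ) * ((n:ℤ)+1))) * t ^ (-(2 * ((n:ℤ)+1))) =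
        t ^ (-(((n:ℤ)+1) * ((n:ℤ)+1+1))) := by
      rw [← zpow_add₀ t_ne]; ring_nf
    push_cast
    rw [pow_succ]
    linear_combination (poch q q n * (1 - q*q^n) * (-1)^n * (-1)) * hz

lemma poch_inv_ne (n : ℕ) : poch q⁻¹ q⁻¹ (n : ℤ) ≠ 0 := by
  rw [poch_inv]
  exact mul_ne_zero (mul_ne_zero (pow_ne_zero _ (by norm_num)) (zpow_ne_zero _ t_ne))
    (poch_q_ne n)

lemma qinv_zpow (e : ℤ) : (q⁻¹ : F) ^ e = t ^ (-2 * e) := by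
  have : (q⁻¹ : F) = t ^ (-2 : ℤ) := by
    rw [q, zpow_neg, ← zpow_natCast t 2]; norm_num
  rw [this, ← zpow_mul]

lemma key (j m s L : ℕ) (A : ℤ) (hA : A = (m:ℤ) - j) (hL : L = j + m + s) :
    t ^ ((L:ℤ)*((L:ℤ)-1) - A*(A-1)) *
      (q⁻¹ ^ ((j:ℤ)*((j:ℤ)+(A-1))) * poch q⁻¹ q⁻¹ (L:ℤ) /
        (poch q⁻¹ q⁻¹ (j:ℤ) * poch q⁻¹ q⁻¹ ((j:ℤ)+A) * poch q⁻¹ q⁻¹ ((L:ℤ)-2*(j:ℤ)-A))) /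
      poch q q (L:ℤ)
    = t ^ (((L:ℤ)-2*(j:ℤ)-A) * (((L:ℤ)-2*(j:ℤ)-A) - 1)) /
        (poch q q (j:ℤ) * poch q q ((j:ℤ)+A) * poch q q ((L:ℤ)-2*(j:ℤ)-A)) := by
  subst hA hL
  have e1 : (j:ℤ) + ((m:ℤ) - j) = (m:ℤ) := by ring
  have e2 : ((j+m+s:ℕ):ℤ) - 2*(j:ℤ) - ((m:ℤ)-j) = (s:ℤ) := by push_cast; ring
  rw [e1, e2, mul_div_assoc', div_div, div_eq_div_iff
    (mul_ne_zero (mul_ne_zero (mul_ne_zero (poch_inv_ne j) (poch_inv_ne m)) (poch_inv_ne s))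
      (poch_q_ne (j+m+s)))
    (mul_ne_zero (mul_ne_zero (poch_q_ne j) (poch_q_ne m)) (poch_q_ne s)),
    qinv_zpow, poch_inv j, poch_inv m, poch_inv s, poch_inv (j+m+s)]
  push_cast
  have hts : t ^ (((j:ℤ)+m+s)*(((j:ℤ)+m+s)-1) - ((m:ℤ)-j)*(((m:ℤ)-j)-1)) *
      t ^ (-2 * ((j:ℤ)*((j:ℤ)+((m:ℤ)-(j:ℤ)-1)))) *
      t ^ (-(((j:ℤ)+m+s) * (((j:ℤ)+m+s)+1)))
      = t ^ ((s:ℤ)*((s:ℤ)-1)) * t ^ (-((j:ℤ) * ((j:ℤ)+1))) *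
        (t ^ (-((m:ℤ) * ((m:ℤ)+1))) * t ^ (-((s:ℤ) * ((s:ℤ)+1)))) := by
    rw [← zpow_add₀ t_ne, ← zpow_add₀ t_ne, ← zpow_add₀ t_ne, ← zpow_add₀ t_ne,
      ← zpow_add₀ t_ne]
    congr 1
    ring
  linear_combination ((-1:F)^(j+m+s) * poch q q ((j:ℤ)+m+s) * poch q q (j:ℤ) *
    poch q q (m:ℤ) * poch q q (s:ℤ)) * hts

/-- The fermionic representation of the normalized `q`-trinomial coefficient `Q_1(L,A,q)`
(equations (2.58)-(2.59) of Andrews-Baxter). The sum over `s` is effectively finite: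
all terms with `s > L` vanish, so it is truncated at `s = L`. -/
theorem Q_one_representation :
    ∀ (L : ℕ) (A : ℤ), -(L : ℤ) ≤ A → A ≤ (L : ℤ) →
      Q 1 L A = ∑ s ∈ Finset.range (L + 1),
        if ((s : ℤ) + (L : ℤ) + A) % 2 = 0 then
          t ^ ((s : ℤ) * ((s : ℤ) - 1)) /
            (poch q q (((L : ℤ) - A - (s : ℤ)) / 2) *
              poch q q (((L : ℤ) + A - (s : ℤ)) / 2) * poch q q (s : ℤ))
        else 0 := by
  intro L A hAl hAr
  set f : ℕ → F := fun j => t ^ (((L:ℤ)-2*(j:ℤ)-A) * (((L:ℤ)-2*(j:ℤ)-A) - 1)) /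
      (poch q q (j:ℤ) * poch q q ((j:ℤ)+A) * poch q q ((L:ℤ)-2*(j:ℤ)-A)) with hf
  set g : ℕ → F := fun s =>
      if ((s : ℤ) + (L : ℤ) + A) % 2 = 0 then
        t ^ ((s : ℤ) * ((s : ℤ) - 1)) /
          (poch q q (((L : ℤ) - A - (s : ℤ)) / 2) *
            poch q q (((L : ℤ) + A - (s : ℤ)) / 2) * poch q q (s : ℤ))
      else 0 with hg
  have step1 : Q 1 L A = ∑ j ∈ Finset.range (L + 1), f j := by
    rw [Q, T, trinom, show A - 1 = A - 1 from rfl, Finset.mul_sum, Finset.sum_div]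
    refine Finset.sum_congr rfl fun j hj => ?_
    rcases lt_or_ge ((j:ℤ) + A) 0 with h1 | h1
    · simp [hf, poch_neg h1]
    · rcases lt_or_ge ((L:ℤ) - 2*(j:ℤ) - A) 0 with h2 | h2
      · simp [hf, poch_neg h2]
      · have hm' : (( ((j:ℤ)+A).toNat : ℤ)) = (j:ℤ) + A := Int.toNat_of_nonneg h1
        have hs' : (( ((L:ℤ)-2*(j:ℤ)-A).toNat : ℤ)) = (L:ℤ) - 2*(j:ℤ) - A :=
          Int.toNat_of_nonneg h2
        exact key j (((j:ℤ)+A).toNat) (((L:ℤ)-2*(j:ℤ)-A).toNat) L A (by omega) (by omega)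
  have step2 : ∑ j ∈ Finset.range (L + 1), f j = ∑ s ∈ Finset.range (L + 1), g s := by
    have e1 : ∑ j ∈ (Finset.range (L + 1)).filter
        (fun j : ℕ => 0 ≤ (j:ℤ) + A ∧ 0 ≤ (L:ℤ) - 2*(j:ℤ) - A), f j
        = ∑ j ∈ Finset.range (L + 1), f j := by
      apply Finset.sum_filter_of_ne
      intro j _ hne
      by_contra hp
      apply hne
      rcases not_and_or.mp hp with h | h
      · simp [hf, poch_neg (show ((j:ℤ)+A) < 0 by omega)]
      · simp [hf, poch_neg (show ((L:ℤ)-2*(j:ℤ)-A) < 0 by omega)]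
    have e2 : ∑ s ∈ (Finset.range (L + 1)).filter
        (fun s : ℕ => ((s:ℤ) + L + A) % 2 = 0 ∧ 0 ≤ (L:ℤ) - A - s ∧ 0 ≤ (L:ℤ) + A - s), g s
        = ∑ s ∈ Finset.range (L + 1), g s := by
      apply Finset.sum_filter_of_ne
      intro s _ hne
      by_contra hp
      apply hne
      rcases Decidable.em (((s:ℤ) + L + A) % 2 = 0) with hpar | hpar
      · rcases not_and_or.mp hp with h | h
        · exact absurd hpar h
        rcases not_and_or.mp (by tauto : ¬ (0 ≤ (L:ℤ) - A - s ∧ 0 ≤ (L:ℤ) + A - s)) with h' | h'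
        · simp [hg, poch_neg (show ((L:ℤ) - A - s) / 2 < 0 by omega)]
        · simp [hg, poch_neg (show ((L:ℤ) + A - s) / 2 < 0 by omega)]
      · simp only [hg]
        exact if_neg hpar
    rw [← e1, ← e2]
    refine Finset.sum_nbij' (i := fun j => ((L:ℤ) - 2*(j:ℤ) - A).toNat)
      (j := fun s => (((L:ℤ) - A - (s:ℤ)) / 2).toNat) ?_ ?_ ?_ ?_ ?_
    · intro a ha
      simp only [Finset.mem_filter, Finset.mem_range] at ha ⊢
      omega
    · intro a ha
      simp only [Finset.mem_filter, Finset.mem_range] at ha ⊢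
      omega
    · intro a ha
      simp only [Finset.mem_filter, Finset.mem_range] at ha
      omega
    · intro a ha
      simp only [Finset.mem_filter, Finset.mem_range] at ha
      omega
    · intro a ha
      simp only [Finset.mem_filter, Finset.mem_range] at ha
      obtain ⟨-, h1, h2⟩ := ha
      simp only [hf, hg]
      have hcast : ((((L:ℤ) - 2*(a:ℤ) - A).toNat : ℤ)) = (L:ℤ) - 2*(a:ℤ) - A :=
        Int.toNat_of_nonneg h2
      rw [hcast, if_pos (by omega),
        show ((L:ℤ) - A - ((L:ℤ) - 2*(a:ℤ) - A)) / 2 = (a:ℤ) by omega,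
        show ((L:ℤ) + A - ((L:ℤ) - 2*(a:ℤ) - A)) / 2 = (a:ℤ) + A by omega]
  rw [step1, step2]
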